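/- For every integer l ≥ 0, the weighted inner product satisfies ⟨φ_{l+2}, φ_l⟩_ω = ⟨φ_l, φ_{l+2}⟩_ω = -π[(l+2)(l+5) + (l+1)(l+4)] / ((l+3)(l+5)). -/

import Mathlib

open MeasureTheory Real

/-- The Chebyshev weight `ω(ξ) = (1 - ξ²)^(-1/2)`. -/
noncomputable def chebW (ξ : ℝ) : ℝ := (1 - ξ ^ 2) ^ (-(1 : ℝ) / 2)

/-- The degree-`k` Chebyshev polynomial of the first kind, as a function `ℝ → ℝ`. -/
noncomputable def chebT (k : ℕ) (ξ : ℝ) : ℝ := (Polynomial.Chebyshev.T ℝ k).eval ξ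

/-- The weighted inner product `⟨f, g⟩_ω = ∫_{-1}^{1} f(ξ) g(ξ) ω(ξ) dξ`. -/
noncomputable def ipw (f g : ℝ → ℝ) : ℝ := ∫ ξ in (-1 : ℝ)..1, f ξ * g ξ * chebW ξ

/-- The basis functions
`φ_k(ξ) = T_k(ξ) - (2(k+2)/(k+3)) T_{k+2}(ξ) + ((k+1)/(k+3)) T_{k+4}(ξ)`. -/
noncomputable def phiFun (k : ℕ) (ξ : ℝ) : ℝ :=
  chebT k ξ - (2 * ((k : ℝ) + 2) / ((k : ℝ) + 3)) * chebT (k + 2) ξ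
    + (((k : ℝ) + 1) / ((k : ℝ) + 3)) * chebT (k + 4) ξ


section Aux


lemma chebW_nonneg {ξ : ℝ} (h : ξ ∈ Set.Icc (-1:ℝ) 1) : 0 ≤ chebW ξ := by
  have : (0:ℝ) ≤ 1 - ξ ^ 2 := by nlinarith [h.1, h.2]
  exact Real.rpow_nonneg this _

lemma chebW_meas : Measurable chebW :=
  (measurable_const.sub (measurable_id.pow_const 2)).pow measurable_const

lemma intW_right : IntervalIntegrable chebW volume 0 1 := by
  have hg : IntervalIntegrable (fun x : ℝ => (1 - x) ^ (-(1:ℝ)/2)) volume 0 1 := by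
    have := (intervalIntegral.intervalIntegrable_rpow' (a := 0) (b := 1)
      (r := -(1:ℝ)/2) (by norm_num)).comp_sub_left 1
    simpa using this.symm
  refine hg.mono_fun chebW_meas.aestronglyMeasurable ?_
  refine (ae_restrict_iff' measurableSet_uIoc).mpr (.of_forall fun x hx => ?_)
  rw [Set.uIoc_of_le (by norm_num : (0:ℝ) ≤ 1)] at hx
  obtain ⟨h0, h1⟩ := hx
  have hb : (0:ℝ) ≤ 1 - x := by linarith
  have hnn : 0 ≤ chebW x := chebW_nonneg ⟨by linarith, h1⟩
  simp only [Real.norm_eq_abs]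
  rw [abs_of_nonneg hnn,
    abs_of_nonneg (Real.rpow_nonneg hb _)]
  rcases eq_or_lt_of_le h1 with h | h
  · subst h
    have : (1:ℝ) - 1 ^ 2 = 0 := by norm_num
    simp [chebW, this, Real.zero_rpow (by norm_num : (-(1:ℝ)/2) ≠ 0)]
  · exact Real.rpow_le_rpow_of_nonpos (by linarith) (by nlinarith) (by norm_num)

lemma intW_left : IntervalIntegrable chebW volume (-1) 0 := by
  have hg : IntervalIntegrable (fun x : ℝ => (1 + x) ^ (-(1:ℝ)/2)) volume (-1) 0 := by
    have := (intervalIntegral.intervalIntegrable_rpow' (a := 0) (b := 1)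
      (r := -(1:ℝ)/2) (by norm_num)).comp_add_right 1
    simpa [add_comm] using this
  refine hg.mono_fun chebW_meas.aestronglyMeasurable ?_
  refine (ae_restrict_iff' measurableSet_uIoc).mpr (.of_forall fun x hx => ?_)
  rw [Set.uIoc_of_le (by norm_num : (-1:ℝ) ≤ 0)] at hx
  obtain ⟨h0, h1⟩ := hx
  have hb : (0:ℝ) ≤ 1 + x := by linarith
  have hnn : 0 ≤ chebW x := chebW_nonneg ⟨by linarith, by linarith⟩
  simp only [Real.norm_eq_abs]
  rw [abs_of_nonneg hnn,
    abs_of_nonneg (Real.rpow_nonneg hb _)]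
  exact Real.rpow_le_rpow_of_nonpos (by linarith) (by nlinarith) (by norm_num)

lemma intW : IntervalIntegrable chebW volume (-1) 1 := intW_left.trans intW_right

lemma intPoly {f : ℝ → ℝ} (hf : Continuous f) :
    IntervalIntegrable (fun ξ => f ξ * chebW ξ) volume (-1) 1 := by
  obtain ⟨C, hC⟩ := (isCompact_Icc (a := (-1:ℝ)) (b := 1)).exists_bound_of_continuousOn
    hf.continuousOn
  refine (intW.const_mul C).mono_fun (hf.measurable.mul chebW_meas).aestronglyMeasurable ?_
  refine (ae_restrict_iff' measurableSet_uIoc).mpr (.of_forall fun x hx => ?_)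
  rw [Set.uIoc_of_le (by norm_num : (-1:ℝ) ≤ 1)] at hx
  have hmem : x ∈ Set.Icc (-1:ℝ) 1 := ⟨hx.1.le, hx.2⟩
  have hnn := chebW_nonneg hmem
  have hCx := hC x hmem
  simp only [Real.norm_eq_abs]
  rw [abs_mul, abs_of_nonneg hnn]
  calc |f x| * chebW x ≤ C * chebW x := by
        exact mul_le_mul_of_nonneg_right (by simpa using hCx) hnn
    _ ≤ |C * chebW x| := le_abs_self _

lemma chebT_cont (k : ℕ) : Continuous (chebT k) := by
  exact (Polynomial.Chebyshev.T ℝ k).continuous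

lemma intTW (k : ℕ) : IntervalIntegrable (fun ξ => chebT k ξ * chebW ξ) volume (-1) 1 :=
  intPoly (chebT_cont k)

lemma chebW_eq {x : ℝ} (h : x ∈ Set.Icc (-1:ℝ) 1) : chebW x = 1 / √(1 - x ^ 2) := by
  have h0 : (0:ℝ) ≤ 1 - x ^ 2 := by nlinarith [h.1, h.2]
  rw [chebW, show (-(1:ℝ)/2) = -(1/2) by norm_num, Real.rpow_neg h0, ← Real.sqrt_eq_rpow,
    one_div]

lemma J0 : ∫ ξ in (-1:ℝ)..1, chebW ξ = Real.pi := by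
  have := intervalIntegral.integral_eq_sub_of_hasDerivAt_of_le (f := Real.arcsin)
    (f' := chebW) (by norm_num) Real.continuous_arcsin.continuousOn
    (fun x hx => by
      have := Real.hasDerivAt_arcsin (ne_of_gt hx.1) (ne_of_lt hx.2)
      rwa [← chebW_eq ⟨hx.1.le, hx.2.le⟩] at this) intW
  rw [this, Real.arcsin_one, Real.arcsin_neg_one]
  ring

lemma Jpos (k : ℕ) (hk : 1 ≤ k) : ∫ ξ in (-1:ℝ)..1, chebT k ξ * chebW ξ = 0 := by
  set F : ℝ → ℝ := fun ξ => -(1/(k:ℝ)) * Real.sin (k * Real.arccos ξ) with hF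
  have hkR : (0:ℝ) < k := by exact_mod_cast hk
  have hcont : ContinuousOn F (Set.Icc (-1) 1) :=
    (continuous_const.mul (Real.continuous_sin.comp
      (continuous_const.mul Real.continuous_arccos))).continuousOn
  have hderiv : ∀ x ∈ Set.Ioo (-1:ℝ) 1, HasDerivAt F (chebT k x * chebW x) x := by
    intro x hx
    have ha : HasDerivAt (fun ξ : ℝ => (k:ℝ) * Real.arccos ξ)
        ((k:ℝ) * (-(1 / √(1 - x ^ 2)))) x :=
      (Real.hasDerivAt_arccos (ne_of_gt hx.1) (ne_of_lt hx.2)).const_mul _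
    have hs : HasDerivAt (fun ξ : ℝ => Real.sin ((k:ℝ) * Real.arccos ξ))
        (Real.cos ((k:ℝ) * Real.arccos x) * ((k:ℝ) * (-(1 / √(1 - x ^ 2))))) x :=
      (Real.hasDerivAt_sin _).comp x ha
    have := hs.const_mul (-(1/(k:ℝ)))
    refine this.congr_deriv ?_
    have hTx : chebT k x = Real.cos ((k:ℝ) * Real.arccos x) := by
      have := Polynomial.Chebyshev.T_real_cos (Real.arccos x) k
      rw [Real.cos_arccos (by linarith [hx.1]) (by linarith [hx.2])] at this
      simpa [chebT] using this
    rw [hTx, chebW_eq ⟨hx.1.le, hx.2.le⟩]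
    field_simp
  have := intervalIntegral.integral_eq_sub_of_hasDerivAt_of_le (by norm_num) hcont hderiv
    (intTW k)
  rw [this, hF]
  simp [Real.arccos_one, Real.arccos_neg_one, Real.sin_nat_mul_pi]


lemma ipw_comm (f g : ℝ → ℝ) : ipw f g = ipw g f := by
  simp only [ipw, mul_comm]

lemma mulTT {m n : ℕ} (h : n ≤ m) (ξ : ℝ) :
    chebT m ξ * chebT n ξ = (chebT (m + n) ξ + chebT (m - n) ξ) / 2 := by
  have h2 := Polynomial.Chebyshev.T_mul_T (R := ℝ) (m : ℤ) (n : ℤ)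
  have := congrArg (Polynomial.eval ξ) h2
  simp only [Polynomial.eval_mul, Polynomial.eval_add, Polynomial.eval_ofNat] at this
  have hmn : (m : ℤ) - (n : ℤ) = ((m - n : ℕ) : ℤ) := by omega
  rw [hmn] at this
  have hpn : (m : ℤ) + (n : ℤ) = ((m + n : ℕ) : ℤ) := by omega
  rw [hpn] at this
  simp only [chebT]
  linarith [this]

lemma ipwTT {m n : ℕ} (h : n ≤ m) :
    ipw (chebT m) (chebT n) =
      ((∫ ξ in (-1:ℝ)..1, chebT (m + n) ξ * chebW ξ)
        + ∫ ξ in (-1:ℝ)..1, chebT (m - n) ξ * chebW ξ) / 2 := by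
  rw [ipw]
  have : ∀ ξ : ℝ, chebT m ξ * chebT n ξ * chebW ξ =
      (chebT (m + n) ξ * chebW ξ + chebT (m - n) ξ * chebW ξ) / 2 := by
    intro ξ; rw [mulTT h]; ring
  simp only [this]
  rw [intervalIntegral.integral_div, intervalIntegral.integral_add (intTW _) (intTW _)]

lemma ipwT_ne {m n : ℕ} (h : m ≠ n) : ipw (chebT m) (chebT n) = 0 := by
  rcases le_or_gt n m with hle | hlt
  · rw [ipwTT hle, Jpos (m + n) (by omega), Jpos (m - n) (by omega)]; norm_num
  · rw [ipw_comm, ipwTT hlt.le, Jpos (n + m) (by omega), Jpos (n - m) (by omega)]; norm_num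

lemma ipwT_self {m : ℕ} (h : 1 ≤ m) : ipw (chebT m) (chebT m) = Real.pi / 2 := by
  rw [ipwTT le_rfl, Jpos (m + m) (by omega)]
  simp only [Nat.sub_self]
  have : ∀ ξ : ℝ, chebT 0 ξ = 1 := by
    intro ξ; simp [chebT]
  simp only [this, one_mul, J0]
  ring


lemma phiFun_cont (k : ℕ) : Continuous (phiFun k) :=
  ((chebT_cont k).sub (continuous_const.mul (chebT_cont (k + 2)))).add
    (continuous_const.mul (chebT_cont (k + 4)))

lemma ipw_phi_right (f : ℝ → ℝ) (hf : Continuous f) (b : ℕ) :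
    ipw f (phiFun b) = ipw f (chebT b)
      - (2 * ((b : ℝ) + 2) / ((b : ℝ) + 3)) * ipw f (chebT (b + 2))
      + (((b : ℝ) + 1) / ((b : ℝ) + 3)) * ipw f (chebT (b + 4)) := by
  have key : (fun ξ => f ξ * phiFun b ξ * chebW ξ) =
      fun ξ => (f ξ * chebT b ξ * chebW ξ
        - (2 * ((b : ℝ) + 2) / ((b : ℝ) + 3)) * (f ξ * chebT (b + 2) ξ * chebW ξ))
        + (((b : ℝ) + 1) / ((b : ℝ) + 3)) * (f ξ * chebT (b + 4) ξ * chebW ξ) := by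
    funext ξ; unfold phiFun; ring
  have i0 : IntervalIntegrable (fun ξ => f ξ * chebT b ξ * chebW ξ) volume (-1) 1 := by
    simpa [mul_assoc] using intPoly (hf.mul (chebT_cont b))
  have i2 : IntervalIntegrable (fun ξ => f ξ * chebT (b + 2) ξ * chebW ξ) volume (-1) 1 := by
    simpa [mul_assoc] using intPoly (hf.mul (chebT_cont (b + 2)))
  have i4 : IntervalIntegrable (fun ξ => f ξ * chebT (b + 4) ξ * chebW ξ) volume (-1) 1 := by
    simpa [mul_assoc] using intPoly (hf.mul (chebT_cont (b + 4)))
  rw [ipw, key, intervalIntegral.integral_add (i0.sub (i2.const_mul _)) (i4.const_mul _),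
    intervalIntegral.integral_sub i0 (i2.const_mul _), intervalIntegral.integral_const_mul,
    intervalIntegral.integral_const_mul, ipw, ipw, ipw]


end Aux

/-- For every `l ≥ 0`,
`⟨φ_{l+2}, φ_l⟩_ω = ⟨φ_l, φ_{l+2}⟩_ω = -π[(l+2)(l+5) + (l+1)(l+4)] / ((l+3)(l+5))`. -/
theorem ipw_phiFun_second_diagonal (l : ℕ) :
    ipw (phiFun (l + 2)) (phiFun l) =
      -(Real.pi * (((l : ℝ) + 2) * ((l : ℝ) + 5) + ((l : ℝ) + 1) * ((l : ℝ) + 4)))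
        / (((l : ℝ) + 3) * ((l : ℝ) + 5)) ∧
    ipw (phiFun l) (phiFun (l + 2)) =
      -(Real.pi * (((l : ℝ) + 2) * ((l : ℝ) + 5) + ((l : ℝ) + 1) * ((l : ℝ) + 4)))
        / (((l : ℝ) + 3) * ((l : ℝ) + 5)) := by
  have h1 : ipw (phiFun (l + 2)) (phiFun l) =
      -(Real.pi * (((l : ℝ) + 2) * ((l : ℝ) + 5) + ((l : ℝ) + 1) * ((l : ℝ) + 4)))
        / (((l : ℝ) + 3) * ((l : ℝ) + 5)) := by
    rw [ipw_phi_right _ (phiFun_cont (l + 2)) l,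
      ipw_comm (phiFun (l + 2)) (chebT l),
      ipw_comm (phiFun (l + 2)) (chebT (l + 2)),
      ipw_comm (phiFun (l + 2)) (chebT (l + 4)),
      ipw_phi_right (chebT l) (chebT_cont l) (l + 2),
      ipw_phi_right (chebT (l + 2)) (chebT_cont (l + 2)) (l + 2),
      ipw_phi_right (chebT (l + 4)) (chebT_cont (l + 4)) (l + 2)]
    simp only [show l + 2 + 2 = l + 4 from rfl, show l + 2 + 4 = l + 6 from rfl]
    rw [ipwT_ne (show l ≠ l + 2 by omega), ipwT_ne (show l ≠ l + 4 by omega),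
      ipwT_ne (show l ≠ l + 6 by omega), ipwT_self (show 1 ≤ l + 2 by omega),
      ipwT_ne (show l + 2 ≠ l + 4 by omega), ipwT_ne (show l + 2 ≠ l + 6 by omega),
      ipwT_ne (show l + 4 ≠ l + 2 by omega), ipwT_self (show 1 ≤ l + 4 by omega),
      ipwT_ne (show l + 4 ≠ l + 6 by omega)]
    have h3 : ((l : ℝ) + 3) ≠ 0 := by positivity
    have h5 : ((l : ℝ) + 5) ≠ 0 := by positivity
    push_cast
    field_simp
    ring
  exact ⟨h1, by rw [ipw_comm]; exact h1⟩
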